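/- For every functor F in A = Fun(C, G), the functor F^+ in B = Fun(Cᵒᵖ, G) is pure injective. -/

import Mathlib

set_option linter.unusedSectionVars false

open CategoryTheory CategoryTheory.Limits CategoryTheory.MonoidalCategory
  CategoryTheory.MonoidalClosed

universe v u

namespace FlatFunctorsPaper

variable {G : Type u} [Category.{v} G] [Abelian G] [MonoidalCategory G]
  [SymmetricCategory G] [MonoidalClosed G] [MonoidalPreadditive G]

/-- `X⁺ = [X, J]`, the internal hom into `J`. -/
noncomputable def pObj (J X : G) : G := (ihom X).obj J

/-- The contravariant functorial action of `(-)⁺ = [-, J]`. -/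
noncomputable def pMap (J : G) {X Y : G} (f : X ⟶ Y) : pObj J Y ⟶ pObj J X :=
  (MonoidalClosed.pre f).app J

@[simp] lemma pMap_id (J X : G) : pMap J (𝟙 X) = 𝟙 (pObj J X) := by
  simp [pMap, pObj]

@[simp] lemma pMap_comp (J : G) {X Y Z : G} (f : X ⟶ Y) (g : Y ⟶ Z) :
    pMap J (f ≫ g) = pMap J g ≫ pMap J f := by
  simp [pMap, pObj]

@[simp] lemma pMap_zero (J : G) (X Y : G) : pMap J (0 : X ⟶ Y) = 0 := by
  show (MonoidalClosed.pre (0 : X ⟶ Y)).app J = (0 : (ihom Y).obj J ⟶ (ihom X).obj J)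
  apply MonoidalClosed.uncurry_injective
  rw [MonoidalClosed.uncurry_pre, MonoidalClosed.uncurry_eq]
  simp

/-- The canonical biduality morphism `X ⟶ X⁺⁺` in `G`. -/
noncomputable def bid (J X : G) : X ⟶ pObj J (pObj J X) :=
  MonoidalClosed.curry ((β_ (pObj J X) X).hom ≫ (ihom.ev X).app J)

lemma bid_natural (J : G) {X Y : G} (f : X ⟶ Y) :
    f ≫ bid J Y = bid J X ≫ pMap J (pMap J f) := by
  show f ≫ MonoidalClosed.curry ((β_ ((ihom Y).obj J) Y).hom ≫ (ihom.ev Y).app J) =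
    MonoidalClosed.curry ((β_ ((ihom X).obj J) X).hom ≫ (ihom.ev X).app J) ≫
      (MonoidalClosed.pre ((MonoidalClosed.pre f).app J)).app J
  apply MonoidalClosed.uncurry_injective
  rw [MonoidalClosed.uncurry_natural_left, MonoidalClosed.uncurry_natural_left]
  erw [MonoidalClosed.uncurry_curry, MonoidalClosed.uncurry_pre]
  rw [whisker_exchange_assoc]
  rw [← MonoidalClosed.uncurry_eq, MonoidalClosed.uncurry_curry]
  simp

section Dual

variable {D : Type v} [SmallCategory D]

/-- The objectwise dual `F⁺` of a functor `F : D ⥤ G`, a functor `Dᵒᵖ ⥤ G`. -/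
@[simps] noncomputable def dObj (J : G) (F : D ⥤ G) : Dᵒᵖ ⥤ G where
  obj c := pObj J (F.obj c.unop)
  map f := pMap J (F.map f.unop)
  map_id c := by simp
  map_comp f g := by simp

/-- The dual of a natural transformation. -/
@[simps] noncomputable def dMap (J : G) {F F' : D ⥤ G} (η : F ⟶ F') :
    dObj J F' ⟶ dObj J F where
  app c := pMap J (η.app c.unop)
  naturality _ _ f := by
    show pMap J _ ≫ pMap J _ = pMap J _ ≫ pMap J _
    rw [← pMap_comp, ← pMap_comp, NatTrans.naturality]

@[simp] lemma dMap_id (J : G) (F : D ⥤ G) : dMap J (𝟙 F) = 𝟙 (dObj J F) := by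
  ext c; simp; rfl

@[simp] lemma dMap_comp (J : G) {F F' F'' : D ⥤ G} (α : F ⟶ F') (β : F' ⟶ F'') :
    dMap J (α ≫ β) = dMap J β ≫ dMap J α := by
  ext c; simp; rfl

@[simp] lemma dMap_zero (J : G) (F F' : D ⥤ G) : dMap J (0 : F ⟶ F') = 0 := by
  ext c; simp; rfl

/-- The double dual `F⁺⁺` of a functor `F : D ⥤ G`. -/
noncomputable def ddObj (J : G) (F : D ⥤ G) : D ⥤ G := opOp D ⋙ dObj J (dObj J F)

/-- The canonical natural transformation `φ_F : F ⟶ F⁺⁺`. -/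
noncomputable def phi (J : G) (F : D ⥤ G) : F ⟶ ddObj J F where
  app c := bid J (F.obj c)
  naturality _ _ f := bid_natural J (F.map f)

/-- The dual of a short exact sequence (short complex) of functors. -/
noncomputable def dSC (J : G) (S : ShortComplex (D ⥤ G)) : ShortComplex (Dᵒᵖ ⥤ G) :=
  ShortComplex.mk (dMap J S.g) (dMap J S.f) (by rw [← dMap_comp, S.zero, dMap_zero])

/-- A short exact sequence of functors is *pure* if its dual splits. -/
def IsPure (J : G) (S : ShortComplex (D ⥤ G)) : Prop := Nonempty ((dSC J S).Splitting)

/-- A functor `F` is *flat* if every short exact sequence ending in `F` is pure. -/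
def IsFlat (J : G) (F : D ⥤ G) : Prop :=
  ∀ ⦃K E : D ⥤ G⦄ (i : K ⟶ E) (p : E ⟶ F) (w : i ≫ p = 0),
    (ShortComplex.mk i p w).ShortExact → IsPure J (ShortComplex.mk i p w)

/-- A functor `X` is *cotorsion* if every short exact sequence `0 → X → E → F → 0`
with `F` flat splits. -/
def IsCotorsion (J : G) (X : D ⥤ G) : Prop :=
  ∀ ⦃E F : D ⥤ G⦄ (i : X ⟶ E) (p : E ⟶ F) (w : i ≫ p = 0),
    (ShortComplex.mk i p w).ShortExact → IsFlat J F →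
      Nonempty (ShortComplex.mk i p w).Splitting

/-- A functor `P` is *pure injective* if every morphism into `P` extends along
pure monomorphisms. -/
def IsPureInjective (J : G) (P : D ⥤ G) : Prop :=
  ∀ ⦃K E L : D ⥤ G⦄ (i : K ⟶ E) (p : E ⟶ L) (w : i ≫ p = 0),
    (ShortComplex.mk i p w).ShortExact → IsPure J (ShortComplex.mk i p w) →
      ∀ f : K ⟶ P, ∃ h : E ⟶ P, i ≫ h = f

end Dual

section ObjectLevel

/-- The dual of a short exact sequence (short complex) in `G`. -/
noncomputable def dSCG (J : G) (S : ShortComplex G) : ShortComplex G :=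
  ShortComplex.mk (pMap J S.g) (pMap J S.f) (by rw [← pMap_comp, S.zero, pMap_zero])

/-- A short exact sequence in `G` is *pure* if its dual splits. -/
def IsPureG (J : G) (S : ShortComplex G) : Prop := Nonempty ((dSCG J S).Splitting)

/-- An object `X` of `G` is *flat* if every short exact sequence ending in `X` is pure. -/
def IsFlatG (J X : G) : Prop :=
  ∀ ⦃K E : G⦄ (i : K ⟶ E) (p : E ⟶ X) (w : i ≫ p = 0),
    (ShortComplex.mk i p w).ShortExact → IsPureG J (ShortComplex.mk i p w)

/-- An object `X` of `G` is *cotorsion* if every short exact sequence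
`0 → X → E → F → 0` with `F` flat splits. -/
def IsCotorsionG (J X : G) : Prop :=
  ∀ ⦃E F : G⦄ (i : X ⟶ E) (p : E ⟶ F) (w : i ≫ p = 0),
    (ShortComplex.mk i p w).ShortExact → IsFlatG J F →
      Nonempty (ShortComplex.mk i p w).Splitting

/-- The flat objects and the cotorsion objects form a complete cotorsion theory in `G`:
every object has a special flat precover and a special cotorsion preenvelope. -/
def CompleteFlatCotorsionTheoryG (J : G) : Prop :=
  ∀ X : G,
    (∃ (Cx F : G) (i : Cx ⟶ F) (p : F ⟶ X) (w : i ≫ p = 0),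
      (ShortComplex.mk i p w).ShortExact ∧ IsFlatG J F ∧ IsCotorsionG J Cx) ∧
    (∃ (Cx F : G) (i : X ⟶ Cx) (p : Cx ⟶ F) (w : i ≫ p = 0),
      (ShortComplex.mk i p w).ShortExact ∧ IsCotorsionG J Cx ∧ IsFlatG J F)

end ObjectLevel

section Complexes

variable {D : Type v} [SmallCategory D]

/-- A *flat complex*: an acyclic complex of flat functors all of whose kernels of
differentials are flat (equivalently, a pure acyclic complex of flat functors). -/
def IsFlatComplex (J : G) (X : CochainComplex (D ⥤ G) ℤ) : Prop :=
  (∀ n, X.ExactAt n) ∧ (∀ n, IsFlat J (X.X n)) ∧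
    ∀ n : ℤ, IsFlat J (kernel (X.d n (n + 1)))

/-- A *cotorsion complex*: an acyclic complex of cotorsion functors all of whose
kernels of differentials are cotorsion. -/
def IsCotorsionComplex (J : G) (X : CochainComplex (D ⥤ G) ℤ) : Prop :=
  (∀ n, X.ExactAt n) ∧ (∀ n, IsCotorsion J (X.X n)) ∧
    ∀ n : ℤ, IsCotorsion J (kernel (X.d n (n + 1)))

/-- A complex is *dg-cotorsion* if every short exact sequence of complexes
`0 → X → E → F → 0` with `F` a flat complex splits. -/
def IsDgCotorsion (J : G) (X : CochainComplex (D ⥤ G) ℤ) : Prop :=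
  ∀ ⦃E F : CochainComplex (D ⥤ G) ℤ⦄ (i : X ⟶ E) (p : E ⟶ F) (w : i ≫ p = 0),
    (ShortComplex.mk i p w).ShortExact → IsFlatComplex J F →
      Nonempty (ShortComplex.mk i p w).Splitting

end Complexes


section Statement

variable {C : Type v} [SmallCategory C]
variable [HasLimits G] [HasColimits G] [AB5 G] [HasSeparator G]


/-- The transpose `Hom(X, Y⁺) ≃ Hom(Y, X⁺)`. -/
noncomputable def tr (J : G) {X Y : G} (u : X ⟶ pObj J Y) : Y ⟶ pObj J X :=
  MonoidalClosed.curry ((β_ X Y).hom ≫ MonoidalClosed.uncurry u)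

lemma uncurry_tr (J : G) {X Y : G} (u : X ⟶ pObj J Y) :
    MonoidalClosed.uncurry (tr J u) = (β_ X Y).hom ≫ MonoidalClosed.uncurry u := by
  rw [tr, MonoidalClosed.uncurry_curry]

lemma tr_tr (J : G) {X Y : G} (u : X ⟶ pObj J Y) : tr J (tr J u) = u := by
  apply MonoidalClosed.uncurry_injective
  rw [uncurry_tr, uncurry_tr, SymmetricCategory.symmetry_assoc]

lemma tr_comp (J : G) {X' X Y : G} (a : X' ⟶ X) (u : X ⟶ pObj J Y) :
    tr J (a ≫ u) = tr J u ≫ pMap J a := by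
  apply MonoidalClosed.uncurry_injective
  erw [uncurry_tr, MonoidalClosed.uncurry_natural_left, pMap]
  dsimp only [pObj]
  conv_rhs => erw [MonoidalClosed.uncurry_eq, MonoidalCategory.whiskerLeft_comp, Category.assoc,
    MonoidalClosed.id_tensor_pre_app_comp_ev, whisker_exchange_assoc,
    ← MonoidalClosed.uncurry_eq, uncurry_tr]
  rw [BraidedCategory.braiding_naturality_left_assoc]

lemma comp_tr (J : G) {X Y' Y : G} (b : Y' ⟶ Y) (u : X ⟶ pObj J Y) :
    b ≫ tr J u = tr J (u ≫ pMap J b) := by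
  apply MonoidalClosed.uncurry_injective
  erw [MonoidalClosed.uncurry_natural_left, uncurry_tr, uncurry_tr, pMap]
  dsimp only [pObj]
  conv_rhs => erw [MonoidalClosed.uncurry_eq, MonoidalCategory.whiskerLeft_comp, Category.assoc,
    MonoidalClosed.id_tensor_pre_app_comp_ev, whisker_exchange_assoc,
    ← MonoidalClosed.uncurry_eq]
  rw [← BraidedCategory.braiding_naturality_right_assoc]

/-- For every functor `F` in `A = Fun(C, G)`, the functor `F⁺` in `B = Fun(Cᵒᵖ, G)` is
pure injective. -/
theorem statement1 (J : G) [Injective J] (hJ : IsCoseparator J) (F : C ⥤ G) :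
    IsPureInjective J (dObj J F) := by
  intro K E L i p w hSE hPure f
  obtain ⟨sp⟩ := hPure
  have hs : sp.s ≫ dMap J i = 𝟙 (dObj J K) := sp.s_g
  -- the key pointwise identity
  have key : ∀ {c c' : Cᵒᵖ} (φ : c ⟶ c'),
      (tr J (f.app c') ≫ sp.s.app (Opposite.op c')) ≫ pMap J (E.map φ) =
        F.map φ.unop ≫ (tr J (f.app c) ≫ sp.s.app (Opposite.op c)) := by
    intro c c' φ
    have hnat := sp.s.naturality φ.op
    simp only [dSC, dObj_map, Quiver.Hom.unop_op] at hnat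
    erw [Category.assoc, ← hnat, ← Category.assoc (tr J (f.app c')),
      ← Category.assoc (F.map φ.unop)]
    refine congrArg (fun x => x ≫ sp.s.app (Opposite.op c)) ?_
    erw [← tr_comp]
    have hf := f.naturality φ
    dsimp [dObj] at hf
    erw [hf, ← comp_tr]
  refine ⟨{ app := fun c => tr J (tr J (f.app c) ≫ sp.s.app (Opposite.op c)),
            naturality := ?_ }, ?_⟩
  · intro c c' φ
    simp only [dObj_map]
    erw [comp_tr, ← tr_comp, key]
    rfl
  · ext c
    dsimp
    erw [comp_tr]
    have h1 : sp.s.app (Opposite.op c) ≫ pMap J (i.app c) = 𝟙 (pObj J (K.obj c)) := by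
      have h2 := congrArg (fun η => NatTrans.app η (Opposite.op c)) hs
      dsimp [dMap, dSC, dObj] at h2
      exact h2
    erw [Category.assoc, h1, Category.comp_id, tr_tr]

end Statement

end FlatFunctorsPaper
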